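/- Let V be a complex normed vector space, let z_1, …, z_m ∈ ℂ with |z_j| ≠ 1 for all j, and let A : ℂ ∖ {z_1, …, z_m} → V be a function such that (z − z_1)⋯(z − z_m)·A(z) agrees there with a polynomial of degree at most n with coefficients in V, and such that ‖A(z)‖ ≤ 1 for all z with |z| = 1. Then ∫_{S¹} ‖A'(z)‖ |dz| := ∫_0^{2π} ‖A'(e^{iθ})‖ dθ ≤ 2π · max(m, n). -/

import Mathlib

open scoped Real
open Complex Polynomial

noncomputable section

namespace Spijker

namespace Complex

def abs : AbsoluteValue ℂ ℝ where
  toFun := fun z => ‖z‖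
  map_mul' := norm_mul
  nonneg' := norm_nonneg
  eq_zero' := fun _ => norm_eq_zero
  add_le' := norm_add_le

lemma norm_eq_abs (z : ℂ) : ‖z‖ = abs z := rfl

lemma sq_abs (z : ℂ) : abs z ^ 2 = _root_.Complex.normSq z := (_root_.Complex.sq_norm z)

lemma normSq_eq_abs (z : ℂ) : _root_.Complex.normSq z = abs z ^ 2 := (sq_abs z).symm

lemma mul_self_abs (z : ℂ) : abs z * abs z = _root_.Complex.normSq z := by
  rw [← sq_abs, sq]

@[simp] lemma abs_conj (z : ℂ) : abs ((starRingEnd ℂ) z) = abs z := _root_.Complex.norm_conj z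

@[simp] lemma abs_ofReal (r : ℝ) : abs (r : ℂ) = |r| := _root_.Complex.norm_real r

@[simp] lemma abs_exp_ofReal_mul_I (x : ℝ) : abs (_root_.Complex.exp (x * _root_.Complex.I)) = 1 :=
  _root_.Complex.norm_exp_ofReal_mul_I x

lemma re_le_abs (z : ℂ) : z.re ≤ abs z := _root_.Complex.re_le_norm z

end Complex

private lemma circle_mul_conj {u : ℂ} (hu : Complex.abs u = 1) : u * (starRingEnd ℂ) u = 1 := by
  rw [Complex.mul_conj]
  norm_cast
  rw [← Complex.sq_abs, hu]; norm_num

private lemma circle_conj_eq_inv {u : ℂ} (hu : Complex.abs u = 1) : (starRingEnd ℂ) u = u⁻¹ := by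
  have h0 : u ≠ 0 := by
    intro h; rw [h] at hu; simp at hu
  field_simp
  rw [mul_comm]
  exact circle_mul_conj hu

private lemma one_sub_conj_eq {a u : ℂ} (hu : Complex.abs u = 1) :
    1 - (starRingEnd ℂ) a * u = u * (starRingEnd ℂ) (u - a) := by
  have h1 := circle_mul_conj hu
  rw [map_sub, mul_sub, h1]; ring

private lemma abs_one_sub_conj {a u : ℂ} (hu : Complex.abs u = 1) :
    Complex.abs (1 - (starRingEnd ℂ) a * u) = Complex.abs (u - a) := by
  rw [one_sub_conj_eq hu, map_mul, hu, one_mul, Complex.abs_conj]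

private lemma prod_factor_eq {ζ a : ℂ} (hζ : Complex.abs ζ = 1) :
    (1 - (starRingEnd ℂ) a * ζ) * (ζ - a) = ζ * ((Complex.normSq (ζ - a) : ℝ) : ℂ) := by
  rw [one_sub_conj_eq hζ]
  have h := Complex.mul_conj (ζ - a)
  calc ζ * (starRingEnd ℂ) (ζ - a) * (ζ - a) = ζ * ((ζ - a) * (starRingEnd ℂ) (ζ - a)) := by ring
  _ = ζ * ((Complex.normSq (ζ - a) : ℝ) : ℂ) := by rw [h]

private lemma normSq_lt_one_iff {a : ℂ} : Complex.normSq a < 1 ↔ Complex.abs a < 1 := by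
  rw [← Complex.sq_abs]
  constructor
  · intro h; nlinarith [Complex.abs.nonneg a]
  · intro h; nlinarith [Complex.abs.nonneg a]

private lemma one_lt_normSq_iff {a : ℂ} : 1 < Complex.normSq a ↔ 1 < Complex.abs a := by
  rw [← Complex.sq_abs]
  constructor
  · intro h; nlinarith [Complex.abs.nonneg a]
  · intro h; nlinarith [Complex.abs.nonneg a]

private lemma re_key {ζ a : ℂ} (hζ : Complex.abs ζ = 1) (hne : ζ ≠ a) :
    (ζ * (ζ - a)⁻¹).re = 1/2 + (1 - Complex.normSq a) / (2 * Complex.normSq (ζ - a)) := by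
  have hsub : ζ - a ≠ 0 := sub_ne_zero.mpr hne
  have hN : Complex.normSq (ζ - a) ≠ 0 := by
    simpa [Complex.normSq_eq_zero] using hsub
  have hNz : Complex.normSq ζ = 1 := by rw [Complex.normSq_eq_abs, hζ]; norm_num
  have hNs : Complex.normSq (ζ - a) = 1 + Complex.normSq a - 2 * (ζ * (starRingEnd ℂ) a).re := by
    rw [Complex.normSq_sub, hNz]
  have h2 : (ζ * (ζ - a)⁻¹).re = (1 - (ζ * (starRingEnd ℂ) a).re) / Complex.normSq (ζ - a) := by
    rw [Complex.inv_def]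
    have h3 : ζ * ((starRingEnd ℂ) (ζ - a) * (((Complex.normSq (ζ - a))⁻¹ : ℝ) : ℂ))
        = (((Complex.normSq (ζ - a))⁻¹ : ℝ) : ℂ) * (ζ * (starRingEnd ℂ) (ζ - a)) := by
      ring
    rw [h3, Complex.re_ofReal_mul]
    have h4 : ζ * (starRingEnd ℂ) (ζ - a) = 1 - ζ * (starRingEnd ℂ) a := by
      rw [map_sub, mul_sub, circle_mul_conj hζ]
    rw [h4, Complex.sub_re, Complex.one_re, div_eq_inv_mul]
  have hN' : 1 + Complex.normSq a - 2 * (ζ * (starRingEnd ℂ) a).re ≠ 0 := by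
    rw [← hNs]; exact hN
  rw [h2, hNs]
  set t := (ζ * (starRingEnd ℂ) a).re with ht
  set Na := Complex.normSq a with hNa
  field_simp
  have h5 : (1 - t * 2 + Na) ≠ 0 := by contrapose! hN'; linarith
  linear_combination mul_inv_cancel₀ h5


/-! ### Logarithmic derivative of polynomials -/

private def dlog (p : ℂ[X]) (x : ℂ) : ℂ := (derivative p).eval x / p.eval x

private lemma dlog_mul {p q : ℂ[X]} {x : ℂ} (hp : p.eval x ≠ 0) (hq : q.eval x ≠ 0) :
    dlog (p * q) x = dlog p x + dlog q x := by
  unfold dlog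
  rw [derivative_mul, eval_add, eval_mul, eval_mul, eval_mul]
  field_simp

private lemma dlog_prod {ι : Type*} (s : Finset ι) (f : ι → ℂ[X]) (x : ℂ)
    (h : ∀ i ∈ s, (f i).eval x ≠ 0) :
    dlog (∏ i ∈ s, f i) x = ∑ i ∈ s, dlog (f i) x := by
  induction s using Finset.cons_induction with
  | empty => simp [dlog]
  | cons i s hi ih =>
    rw [Finset.prod_cons, Finset.sum_cons]
    have h1 : (f i).eval x ≠ 0 := h i (Finset.mem_cons_self i s)
    have h2 : (∏ j ∈ s, f j).eval x ≠ 0 := by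
      rw [eval_prod]
      exact Finset.prod_ne_zero_iff.mpr fun j hj => h j (Finset.mem_cons_of_mem hj)
    rw [dlog_mul h1 h2, ih fun j hj => h j (Finset.mem_cons_of_mem hj)]

private lemma dlog_X_sub_C (a x : ℂ) : dlog (X - C a) x = (x - a)⁻¹ := by
  simp [dlog, one_div]

private lemma dlog_X_pow (k : ℕ) (x : ℂ) : dlog (X ^ k) x = (k : ℂ) / x := by
  cases k with
  | zero => simp [dlog]
  | succ k' =>
    unfold dlog
    rw [derivative_X_pow]
    rcases eq_or_ne x 0 with h | h
    · simp [h]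
    · rw [eval_mul, eval_C, eval_pow, eval_X, eval_pow, eval_X]
      rw [Nat.add_sub_cancel, pow_succ]
      field_simp

private lemma dlog_C_mul {p : ℂ[X]} {c x : ℂ} (hc : c ≠ 0) (hp : p.eval x ≠ 0) :
    dlog (C c * p) x = dlog p x := by
  unfold dlog
  simp only [derivative_C_mul, eval_mul, eval_C]
  rw [mul_div_mul_left _ _ hc]

private lemma dlog_multiset (s : Multiset ℂ) (x : ℂ) (h : ∀ a ∈ s, x ≠ a) :
    dlog ((s.map (fun a => X - C a)).prod) x = (s.map (fun a => (x - a)⁻¹)).sum := by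
  induction s using Multiset.induction with
  | empty => simp [dlog]
  | cons a s ih =>
    rw [Multiset.map_cons, Multiset.prod_cons, Multiset.map_cons, Multiset.sum_cons]
    have h1 : (X - C a).eval x ≠ 0 := by
      simpa [sub_ne_zero] using h a (Multiset.mem_cons_self a s)
    have h2 : ((s.map (fun a => X - C a)).prod).eval x ≠ 0 := by
      rw [eval_multiset_prod]
      apply Multiset.prod_ne_zero
      intro h0
      rw [Multiset.mem_map] at h0
      obtain ⟨y, hy0, hy⟩ := h0
      rw [Multiset.mem_map] at hy0
      obtain ⟨b, hb, rfl⟩ := hy0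
      rw [eval_sub, eval_X, eval_C] at hy
      exact (sub_ne_zero.mpr (h b (Multiset.mem_cons_of_mem hb))) hy
    rw [dlog_mul h1 h2, ih fun b hb => h b (Multiset.mem_cons_of_mem hb), dlog_X_sub_C]

private lemma dlog_eq_roots_sum (H : ℂ[X]) (hH0 : H ≠ 0) {ζ : ℂ}
    (hroot : ∀ r ∈ H.roots, ζ ≠ r) (hζr : H.eval ζ ≠ 0) :
    dlog H ζ = ((H.roots).map (fun r => (ζ - r)⁻¹)).sum := by
  have hsp := IsAlgClosed.splits H
  have hprod := hsp.eq_prod_roots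
  have hlc : H.leadingCoeff ≠ 0 := Polynomial.leadingCoeff_ne_zero.mpr hH0
  have h2 : (((H.roots).map (fun a => X - C a)).prod).eval ζ ≠ 0 := by
    intro h0
    apply hζr
    conv_lhs => rw [hprod]
    rw [eval_mul, h0, mul_zero]
  conv_lhs => rw [hprod]
  rw [dlog_C_mul hlc h2]
  exact dlog_multiset _ _ hroot

/-! ### Multiset sum comparison -/

private lemma msum_le {α : Type*} (s : Multiset α) (f g : α → ℝ) (h : ∀ a ∈ s, f a ≤ g a) :
    (s.map f).sum ≤ (s.map g).sum := by
  induction s using Multiset.induction with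
  | empty => simp
  | cons a s ih =>
    simp only [Multiset.map_cons, Multiset.sum_cons]
    exact add_le_add (h a (Multiset.mem_cons_self a s))
      (ih fun b hb => h b (Multiset.mem_cons_of_mem hb))

private lemma msum_lt {α : Type*} (s : Multiset α) (f g : α → ℝ) (hs : s ≠ 0)
    (h : ∀ a ∈ s, f a < g a) :
    (s.map f).sum < (s.map g).sum := by
  obtain ⟨a, ha⟩ := Multiset.exists_mem_of_ne_zero hs
  obtain ⟨t, rfl⟩ := Multiset.exists_cons_of_mem ha
  simp only [Multiset.map_cons, Multiset.sum_cons]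
  have h1 : f a < g a := h a (Multiset.mem_cons_self a t)
  have h2 : (t.map f).sum ≤ (t.map g).sum :=
    msum_le t f g fun b hb => le_of_lt (h b (Multiset.mem_cons_of_mem hb))
  linarith

/-! ### Maximum modulus for a quotient of polynomials on the closed unit disc -/

private lemma poly_div_le {p q : ℂ[X]} (hq : ∀ u : ℂ, Complex.abs u ≤ 1 → q.eval u ≠ 0)
    (hb : ∀ u : ℂ, Complex.abs u = 1 → Complex.abs (p.eval u) ≤ Complex.abs (q.eval u)) :
    ∀ u : ℂ, Complex.abs u ≤ 1 → Complex.abs (p.eval u) ≤ Complex.abs (q.eval u) := by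
  intro u hu
  have hball : closure (Metric.ball (0:ℂ) 1) = Metric.closedBall 0 1 := closure_ball 0 one_ne_zero
  set f : ℂ → ℂ := fun w => p.eval w / q.eval w with hf
  have habs : ∀ w : ℂ, w ∈ Metric.closedBall (0:ℂ) 1 → Complex.abs w ≤ 1 := by
    intro w hw
    rw [Metric.mem_closedBall, dist_zero_right] at hw
    exact hw
  have hd : DiffContOnCl ℂ f (Metric.ball 0 1) := by
    constructor
    · apply DifferentiableOn.div
      · exact (p.differentiable).differentiableOn
      · exact (q.differentiable).differentiableOn
      · intro w hw
        exact hq w (habs w (Metric.ball_subset_closedBall hw))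
    · rw [hball]
      apply ContinuousOn.div
      · exact (p.continuous).continuousOn
      · exact (q.continuous).continuousOn
      · intro w hw
        exact hq w (habs w hw)
  have hfr : ∀ w ∈ frontier (Metric.ball (0:ℂ) 1), ‖f w‖ ≤ 1 := by
    intro w hw
    rw [frontier_ball 0 one_ne_zero] at hw
    have hw1 : Complex.abs w = 1 := by
      rw [mem_sphere_zero_iff_norm] at hw
      rw [← Complex.norm_eq_abs]; exact hw
    rw [Complex.norm_eq_abs, hf]
    simp only [map_div₀]
    rw [div_le_one (Complex.abs.pos (hq w (le_of_eq hw1)))]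
    exact hb w hw1
  have hle : ‖f u‖ ≤ 1 := by
    apply Complex.norm_le_of_forall_mem_frontier_norm_le Metric.isBounded_ball hd hfr
    rw [hball, Metric.mem_closedBall, dist_zero_right]
    exact hu
  have hq0 : q.eval u ≠ 0 := hq u hu
  rw [Complex.norm_eq_abs, hf] at hle
  simp only [map_div₀] at hle
  rw [div_le_one (Complex.abs.pos hq0)] at hle
  exact hle

/-! ### Reflected polynomials -/

private def reflP (d : ℕ) (p : ℂ[X]) : ℂ[X] :=
  ∑ i ∈ Finset.range (d+1), C (p.coeff (d - i)) * X ^ i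

private lemma reflP_eval_zero (d : ℕ) (p : ℂ[X]) : (reflP d p).eval 0 = p.coeff d := by
  unfold reflP
  rw [eval_finset_sum]
  rw [Finset.sum_eq_single 0]
  · simp
  · intro i _ hi
    simp [zero_pow hi]
  · intro h
    exact absurd (Finset.mem_range.mpr (Nat.succ_pos d)) h

private lemma reflP_eval {d : ℕ} {p : ℂ[X]} (hp : p.natDegree ≤ d) {u : ℂ} (hu : u ≠ 0) :
    (reflP d p).eval u = u ^ d * p.eval u⁻¹ := by
  unfold reflP
  rw [eval_finset_sum]
  have hlt : p.natDegree < d + 1 := Nat.lt_succ_of_le hp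
  rw [eval_eq_sum_range' hlt u⁻¹, Finset.mul_sum]
  rw [← Finset.sum_range_reflect (fun i => u ^ d * (p.coeff i * u⁻¹ ^ i)) (d+1)]
  apply Finset.sum_congr rfl
  intro i hi
  rw [Finset.mem_range] at hi
  have hid : i ≤ d := Nat.lt_succ_iff.mp hi
  have h1 : d + 1 - 1 - i = d - i := by omega
  rw [h1]
  rw [eval_mul, eval_C, eval_pow, eval_X]
  have h3 : u ^ d = u ^ (d - i) * u ^ i := by
    rw [← pow_add]
    congr 1
    omega
  rw [h3, inv_pow]
  field_simp

/-! ### The per-factor identity -/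

private lemma I1 {ζ a : ℂ} (hζ : Complex.abs ζ = 1) (hne : ζ ≠ a) :
    (-((starRingEnd ℂ) a)) / (1 - (starRingEnd ℂ) a * ζ) - (ζ - a)⁻¹
      = (starRingEnd ℂ) ζ * (((Complex.normSq a - 1) / Complex.normSq (ζ - a) : ℝ) : ℂ) := by
  have hsub : ζ - a ≠ 0 := sub_ne_zero.mpr hne
  have hD1 : 1 - (starRingEnd ℂ) a * ζ ≠ 0 := by
    intro h
    have habs := abs_one_sub_conj (a := a) hζ
    rw [h] at habs
    simp only [map_zero] at habs
    exact hsub (Complex.abs.eq_zero.mp habs.symm)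
  have hN : Complex.normSq (ζ - a) ≠ 0 := by
    simpa [Complex.normSq_eq_zero] using hsub
  have hNC : ((Complex.normSq (ζ - a) : ℝ) : ℂ) ≠ 0 := by exact_mod_cast hN
  have hζ0 : ζ ≠ 0 := by intro h; rw [h] at hζ; simp at hζ
  have hprod := prod_factor_eq (a := a) hζ
  have hNa : ((Complex.normSq a : ℝ) : ℂ) = (starRingEnd ℂ) a * a := by
    rw [mul_comm]; exact (Complex.mul_conj a).symm
  rw [circle_conj_eq_inv hζ, Complex.ofReal_div, Complex.ofReal_sub, Complex.ofReal_one]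
  rw [inv_eq_one_div, div_sub_div _ _ hD1 hsub, hprod]
  have hnum : -(starRingEnd ℂ) a * (ζ - a) - (1 - (starRingEnd ℂ) a * ζ) * 1
      = ((Complex.normSq a : ℝ) : ℂ) - 1 := by
    rw [hNa]; ring
  rw [hnum]
  field_simp

/-! ### small shared facts -/

private lemma lin_eval (a x : ℂ) : (C (-((starRingEnd ℂ) a)) * X + 1).eval x
    = 1 - (starRingEnd ℂ) a * x := by
  simp; ring

private lemma lin_abs_circle (a : ℂ) {u : ℂ} (hu : Complex.abs u = 1) :
    Complex.abs ((C (-((starRingEnd ℂ) a)) * X + 1).eval u) = Complex.abs (u - a) := by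
  rw [lin_eval, abs_one_sub_conj hu]

private lemma lin_eval_ne {a u : ℂ} (h : Complex.abs ((starRingEnd ℂ) a * u) ≠ 1) :
    (C (-((starRingEnd ℂ) a)) * X + 1).eval u ≠ 0 := by
  rw [lin_eval]
  intro h0
  apply h
  have : (starRingEnd ℂ) a * u = 1 := by
    have := sub_eq_zero.mp h0
    exact this.symm
  rw [this]
  simp

private lemma dlog_lin {a x : ℂ} (hx : 1 - (starRingEnd ℂ) a * x ≠ 0) :
    dlog (C (-((starRingEnd ℂ) a)) * X + 1) x
      = (-((starRingEnd ℂ) a)) / (1 - (starRingEnd ℂ) a * x) := by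
  unfold dlog
  have hder : derivative (C (-((starRingEnd ℂ) a)) * X + 1) = C (-((starRingEnd ℂ) a)) := by
    simp
  rw [hder, lin_eval, eval_C]

private lemma lin_natDegree {a : ℂ} (ha : a ≠ 0) :
    (C (-((starRingEnd ℂ) a)) * X + 1).natDegree = 1 := by
  have h : (C (-((starRingEnd ℂ) a)) * X + 1) = C (-((starRingEnd ℂ) a)) * X + C 1 := by
    rw [map_one]
  rw [h]
  apply Polynomial.natDegree_linear
  simp [ha]

private lemma lin_ne_zero {a : ℂ} (ha : a ≠ 0) :
    (C (-((starRingEnd ℂ) a)) * X + 1) ≠ 0 := by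
  intro h
  have := lin_natDegree ha
  rw [h] at this
  simp at this

private lemma lin_natDegree_le (a : ℂ) :
    (C (-((starRingEnd ℂ) a)) * X + 1).natDegree ≤ 1 := by
  apply le_trans (Polynomial.natDegree_add_le _ _)
  simp only [Polynomial.natDegree_one, max_le_iff]
  constructor
  · apply le_trans (Polynomial.natDegree_C_mul_le _ _)
    simp
  · omega

private lemma Qcirc_ne {m : ℕ} {z : Fin m → ℂ} (hz : ∀ j, Complex.abs (z j) ≠ 1)
    {u : ℂ} (hu : Complex.abs u = 1) : (∏ j, (X - C (z j)) : ℂ[X]).eval u ≠ 0 := by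
  rw [eval_prod]
  apply Finset.prod_ne_zero_iff.mpr
  intro j _
  simp only [eval_sub, eval_X, eval_C, sub_ne_zero]
  intro h
  exact hz j (h ▸ hu)

private lemma one_sub_conj_ne {ζ a : ℂ} (hζ : Complex.abs ζ = 1) (hne : ζ ≠ a) :
    1 - (starRingEnd ℂ) a * ζ ≠ 0 := by
  intro h
  have habs := abs_one_sub_conj (a := a) hζ
  rw [h] at habs
  simp only [map_zero] at habs
  exact (sub_ne_zero.mpr hne) (Complex.abs.eq_zero.mp habs.symm)

private lemma re_multiset_sum (s : Multiset ℂ) : s.sum.re = (s.map Complex.re).sum := by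
  induction s using Multiset.induction with
  | empty => simp
  | cons a s ih => simp [ih]

set_option maxHeartbeats 1000000 in
private lemma core_plus {m n : ℕ} {z : Fin m → ℂ} (hz : ∀ j, Complex.abs (z j) ≠ 1)
    {P : ℂ[X]} (hP : P.natDegree ≤ n)
    (hbd : ∀ u : ℂ, Complex.abs u = 1 →
      Complex.abs (P.eval u) ≤ Complex.abs ((∏ j, (X - C (z j)) : ℂ[X]).eval u))
    {ζ : ℂ} (hζ : Complex.abs ζ = 1)
    (hbr : -(∑ j, (if Complex.normSq (z j) < 1 then
          (Complex.normSq (z j) - 1) / Complex.normSq (ζ - z j) else 0))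
        ≤ ((n - m : ℕ) : ℝ) + ∑ j, (if Complex.normSq (z j) < 1 then 0 else
          (Complex.normSq (z j) - 1) / Complex.normSq (ζ - z j)))
    (hdpos : 1 ≤ (n - m) + m) :
    Complex.abs ((derivative P).eval ζ * (∏ j, (X - C (z j)) : ℂ[X]).eval ζ
        - P.eval ζ * (derivative (∏ j, (X - C (z j)) : ℂ[X])).eval ζ)
      ≤ (((n - m : ℕ) : ℝ) + ∑ j, (if Complex.normSq (z j) < 1 then 0 else
          (Complex.normSq (z j) - 1) / Complex.normSq (ζ - z j)))
        * Complex.normSq ((∏ j, (X - C (z j)) : ℂ[X]).eval ζ) := by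
  classical
  set Q : ℂ[X] := ∏ j, (X - C (z j)) with hQdef
  set k : ℕ := n - m with hkdef
  set d : ℕ := k + m with hddef
  set tval : Fin m → ℝ := fun j => if Complex.normSq (z j) < 1 then 0 else
    (Complex.normSq (z j) - 1) / Complex.normSq (ζ - z j) with htvaldef
  set uval : Fin m → ℝ := fun j => if Complex.normSq (z j) < 1 then
    (Complex.normSq (z j) - 1) / Complex.normSq (ζ - z j) else 0 with huvaldef
  set Sp : ℝ := (k : ℝ) + ∑ j, tval j with hSpdef
  set W : ℂ := (derivative P).eval ζ * Q.eval ζ - P.eval ζ * (derivative Q).eval ζ with hWdef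
  -- basic facts
  have hζ0 : ζ ≠ 0 := by intro h; rw [h] at hζ; simp at hζ
  have hzne : ∀ j, ζ ≠ z j := by
    intro j h
    exact hz j (h ▸ hζ)
  have hNj : ∀ j, Complex.normSq (ζ - z j) ≠ 0 := by
    intro j
    simpa [Complex.normSq_eq_zero, sub_eq_zero] using hzne j
  have hNjpos : ∀ j, 0 < Complex.normSq (ζ - z j) := by
    intro j
    exact lt_of_le_of_ne (Complex.normSq_nonneg _) (Ne.symm (hNj j))
  have hnsq_ne : ∀ j, Complex.normSq (z j) ≠ 1 := by
    intro j h
    apply hz j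
    have := Complex.sq_abs (z j)
    rw [h] at this
    nlinarith [Complex.abs.nonneg (z j)]
  have habs_gt : ∀ j, ¬ (Complex.normSq (z j) < 1) → 1 < Complex.abs (z j) := by
    intro j h
    have h1 : 1 < Complex.normSq (z j) := lt_of_le_of_ne (not_lt.mp h) (Ne.symm (hnsq_ne j))
    exact one_lt_normSq_iff.mp h1
  have habs_lt : ∀ j, Complex.normSq (z j) < 1 → Complex.abs (z j) < 1 :=
    fun j h => normSq_lt_one_iff.mp h
  have hQζ : Q.eval ζ ≠ 0 := Qcirc_ne hz hζ
  have hnQζpos : 0 < Complex.normSq (Q.eval ζ) := by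
    have := Complex.normSq_pos.mpr hQζ
    exact this
  -- the comparison polynomial M
  set hfac : Fin m → ℂ[X] := fun j => if Complex.normSq (z j) < 1 then X - C (z j)
    else C (-((starRingEnd ℂ) (z j))) * X + 1 with hhfacdef
  set M : ℂ[X] := X ^ k * ∏ j, hfac j with hMdef
  have hfac_ne_zero : ∀ j, hfac j ≠ 0 := by
    intro j
    rw [hhfacdef]
    by_cases h : Complex.normSq (z j) < 1
    · simp only [if_pos h]
      exact X_sub_C_ne_zero (z j)
    · simp only [if_neg h]
      exact lin_ne_zero (fun h0 => by simp [h0] at h)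
  have hfac_deg : ∀ j, (hfac j).natDegree = 1 := by
    intro j
    rw [hhfacdef]
    by_cases h : Complex.normSq (z j) < 1
    · simp only [if_pos h]; exact natDegree_X_sub_C (z j)
    · simp only [if_neg h]
      have hzj0 : z j ≠ 0 := by
        intro h0
        have := habs_gt j h
        rw [h0] at this; norm_num at this
      exact lin_natDegree hzj0
  have hfac_eval_ne : ∀ j, ∀ v : ℂ, 1 ≤ Complex.abs v → (hfac j).eval v ≠ 0 := by
    intro j v hv
    rw [hhfacdef]
    by_cases h : Complex.normSq (z j) < 1
    · simp only [if_pos h, eval_sub, eval_X, eval_C, sub_ne_zero]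
      intro h0
      have := habs_lt j h
      rw [← h0] at this
      linarith
    · simp only [if_neg h]
      apply lin_eval_ne
      rw [map_mul, Complex.abs_conj]
      have h1 := habs_gt j h
      have hv0 : (0:ℝ) < Complex.abs v := lt_of_lt_of_le one_pos hv
      nlinarith
  have hM_eval_ne : ∀ v : ℂ, 1 ≤ Complex.abs v → M.eval v ≠ 0 := by
    intro v hv
    rw [hMdef, eval_mul, eval_pow, eval_X]
    apply mul_ne_zero
    · apply pow_ne_zero
      intro h; rw [h] at hv; simp at hv; linarith
    · rw [eval_prod]
      exact Finset.prod_ne_zero_iff.mpr fun j _ => hfac_eval_ne j v hv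
  have hM_abs_circle : ∀ u : ℂ, Complex.abs u = 1 →
      Complex.abs (M.eval u) = Complex.abs (Q.eval u) := by
    intro u hu
    rw [hMdef, hQdef, eval_mul, eval_pow, eval_X, map_mul, map_pow, hu, one_pow, one_mul,
      eval_prod, eval_prod]
    rw [AbsoluteValue.map_prod, AbsoluteValue.map_prod]
    apply Finset.prod_congr rfl
    intro j _
    rw [hhfacdef]
    by_cases h : Complex.normSq (z j) < 1
    · simp only [if_pos h]
    · simp only [if_neg h]
      rw [lin_abs_circle (z j) hu]
      simp
  have hM0 : M ≠ 0 := by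
    intro h
    exact hM_eval_ne ζ (le_of_eq hζ.symm) (by rw [h]; simp)
  have hMdeg : M.natDegree = d := by
    rw [hMdef, natDegree_mul (pow_ne_zero k X_ne_zero)
      (Finset.prod_ne_zero_iff.mpr fun j _ => hfac_ne_zero j)]
    rw [natDegree_X_pow, natDegree_prod _ _ fun j _ => hfac_ne_zero j]
    simp only [hfac_deg, Finset.sum_const, Finset.card_univ, Fintype.card_fin, smul_eq_mul,
      mul_one]
    exact hddef.symm
  have hMc : M.coeff d ≠ 0 := by
    rw [← hMdeg]
    exact Polynomial.leadingCoeff_ne_zero.mpr hM0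
  have hnled : n ≤ d := by omega
  have hPd : P.natDegree ≤ d := le_trans hP hnled
  -- reflection and exterior bound
  have hMrefl_ne : ∀ u : ℂ, Complex.abs u ≤ 1 → (reflP d M).eval u ≠ 0 := by
    intro u hu
    rcases eq_or_ne u 0 with rfl | hu0
    · rw [reflP_eval_zero]; exact hMc
    · rw [reflP_eval (le_of_eq hMdeg) hu0]
      apply mul_ne_zero (pow_ne_zero _ hu0)
      apply hM_eval_ne
      rw [map_inv₀]
      have h1 : 0 < Complex.abs u := Complex.abs.pos hu0
      rw [le_inv_comm₀ one_pos h1]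
      simpa using hu
  have hrefl_bd : ∀ u : ℂ, Complex.abs u ≤ 1 →
      Complex.abs ((reflP d P).eval u) ≤ Complex.abs ((reflP d M).eval u) := by
    apply poly_div_le hMrefl_ne
    intro u hu
    have hu0 : u ≠ 0 := by intro h; rw [h] at hu; simp at hu
    have huinv : Complex.abs u⁻¹ = 1 := by rw [map_inv₀, hu]; norm_num
    rw [reflP_eval hPd hu0, reflP_eval (le_of_eq hMdeg) hu0, map_mul, map_mul]
    apply mul_le_mul_of_nonneg_left _ (Complex.abs.nonneg _)
    rw [hM_abs_circle u⁻¹ huinv]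
    exact hbd u⁻¹ huinv
  have hext : ∀ v : ℂ, 1 ≤ Complex.abs v →
      Complex.abs (P.eval v) ≤ Complex.abs (M.eval v) := by
    intro v hv
    have hv0 : v ≠ 0 := by intro h; rw [h] at hv; simp at hv; linarith
    have hvinv : Complex.abs v⁻¹ ≤ 1 := by
      rw [map_inv₀]
      rw [inv_le_one_iff₀]
      right; exact hv
    have h1 := hrefl_bd v⁻¹ hvinv
    rw [reflP_eval hPd (inv_ne_zero hv0), reflP_eval (le_of_eq hMdeg) (inv_ne_zero hv0),
      inv_inv, map_mul, map_mul] at h1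
    have h2 : 0 < Complex.abs (v⁻¹ ^ d) := by
      apply Complex.abs.pos
      exact pow_ne_zero _ (inv_ne_zero hv0)
    exact le_of_mul_le_mul_left h1 h2
  have hcoeff : Complex.abs (P.coeff d) ≤ Complex.abs (M.coeff d) := by
    have h1 := hrefl_bd 0 (by simp)
    rwa [reflP_eval_zero, reflP_eval_zero] at h1
  -- dlog computations
  have hhfac_evalζ : ∀ j, (hfac j).eval ζ ≠ 0 := fun j => hfac_eval_ne j ζ (le_of_eq hζ.symm)
  have hMζ : M.eval ζ ≠ 0 := hM_eval_ne ζ (le_of_eq hζ.symm)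
  have hdlogQ : dlog Q ζ = ∑ j, (ζ - z j)⁻¹ := by
    rw [hQdef, dlog_prod _ _ _ (fun j _ => by
      simp only [eval_sub, eval_X, eval_C, sub_ne_zero]; exact hzne j)]
    exact Finset.sum_congr rfl fun j _ => dlog_X_sub_C (z j) ζ
  have hζk : (X ^ k : ℂ[X]).eval ζ ≠ 0 := by
    rw [eval_pow, eval_X]; exact pow_ne_zero _ hζ0
  have hprodζ : (∏ j, hfac j : ℂ[X]).eval ζ ≠ 0 := by
    rw [eval_prod]; exact Finset.prod_ne_zero_iff.mpr fun j _ => hhfac_evalζ j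
  have hdlogfac : ∀ j, dlog (hfac j) ζ - (ζ - z j)⁻¹
      = (starRingEnd ℂ) ζ * ((tval j : ℝ) : ℂ) := by
    intro j
    rw [hhfacdef, htvaldef]
    by_cases h : Complex.normSq (z j) < 1
    · simp only [if_pos h]
      rw [dlog_X_sub_C]
      simp
    · simp only [if_neg h]
      rw [dlog_lin (one_sub_conj_ne hζ (hzne j))]
      exact I1 hζ (hzne j)
  have hdlogM : dlog M ζ - dlog Q ζ = (starRingEnd ℂ) ζ * ((Sp : ℝ) : ℂ) := by
    have h1 : dlog M ζ = (k : ℂ) / ζ + ∑ j, dlog (hfac j) ζ := by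
      rw [hMdef, dlog_mul hζk hprodζ, dlog_X_pow, dlog_prod _ _ _ (fun j _ => hhfac_evalζ j)]
    rw [h1, hdlogQ, add_sub_assoc, ← Finset.sum_sub_distrib]
    have h2 : ∑ j, (dlog (hfac j) ζ - (ζ - z j)⁻¹)
        = (starRingEnd ℂ) ζ * ∑ j, ((tval j : ℝ) : ℂ) := by
      rw [Finset.mul_sum]
      exact Finset.sum_congr rfl fun j _ => hdlogfac j
    rw [h2, div_eq_mul_inv, ← circle_conj_eq_inv hζ, hSpdef]
    push_cast
    ring
  -- positivity of Sp
  have hrpos : ∀ j, 0 < tval j - uval j := by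
    intro j
    rw [htvaldef, huvaldef]
    by_cases h : Complex.normSq (z j) < 1
    · simp only [if_pos h, zero_sub, sub_zero, neg_pos]
      apply div_neg_of_neg_of_pos
      · linarith
      · exact hNjpos j
    · simp only [if_neg h, sub_zero]
      apply div_pos
      · have h2 : 1 ≤ Complex.normSq (z j) := not_lt.mp h
        rcases lt_or_eq_of_le h2 with h3 | h3
        · linarith
        · exact absurd h3.symm (hnsq_ne j)
      · exact hNjpos j
  have hpos_total : 0 < (k : ℝ) + ∑ j, (tval j - uval j) := by
    rcases Nat.eq_zero_or_pos m with hm | hm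
    · have hk1 : 1 ≤ k := by omega
      have hsum0 : (∑ j, (tval j - uval j)) = 0 := by
        subst hm
        simp
      rw [hsum0]
      have : (1:ℝ) ≤ (k:ℝ) := by exact_mod_cast hk1
      linarith
    · have hpos : 0 < ∑ j, (tval j - uval j) :=
        Finset.sum_pos (fun j _ => hrpos j) ⟨⟨0, hm⟩, Finset.mem_univ _⟩
      have : (0:ℝ) ≤ (k:ℝ) := Nat.cast_nonneg k
      linarith
  have hSppos : 0 < Sp := by
    have h1 : (k:ℝ) + ∑ j, (tval j - uval j) = Sp + (-(∑ j, uval j)) := by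
      rw [hSpdef, Finset.sum_sub_distrib]; ring
    rw [h1] at hpos_total
    linarith [hbr]
  -- the Wronskian T of (M, Q)
  set T : ℂ := (derivative M).eval ζ * Q.eval ζ - M.eval ζ * (derivative Q).eval ζ with hTdef
  have hTval : T = (starRingEnd ℂ) ζ * ((Sp : ℝ) : ℂ) * (M.eval ζ * Q.eval ζ) := by
    have h1 : T = (dlog M ζ - dlog Q ζ) * (M.eval ζ * Q.eval ζ) := by
      unfold dlog
      rw [hTdef]
      field_simp
    rw [h1, hdlogM]
  have habsT : Complex.abs T = Sp * Complex.normSq (Q.eval ζ) := by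
    rw [hTval, map_mul, map_mul, map_mul, Complex.abs_conj, hζ, one_mul, Complex.abs_ofReal,
      hM_abs_circle ζ hζ, abs_of_pos hSppos, Complex.mul_self_abs]
  -- main contradiction
  by_contra hcon
  push_neg at hcon
  have hT0 : T ≠ 0 := by
    intro h
    rw [h, map_zero] at habsT
    nlinarith [hSppos, hnQζpos]
  set μ : ℂ := W / T with hμdef
  have habsμ : 1 < Complex.abs μ := by
    rw [hμdef, map_div₀, habsT, lt_div_iff₀ (by positivity)]
    linarith
  set H : ℂ[X] := C μ * M - P with hHdef
  have hHev : ∀ v : ℂ, 1 ≤ Complex.abs v → H.eval v ≠ 0 := by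
    intro v hv
    rw [hHdef, eval_sub, eval_mul, eval_C, sub_ne_zero]
    intro h
    have h1 : Complex.abs (μ * M.eval v) = Complex.abs (P.eval v) := by rw [h]
    rw [map_mul] at h1
    have h2 := hext v hv
    have h3 : 0 < Complex.abs (M.eval v) := Complex.abs.pos (hM_eval_ne v hv)
    nlinarith
  have hHζ : H.eval ζ ≠ 0 := hHev ζ (le_of_eq hζ.symm)
  have hH0 : H ≠ 0 := fun h => hHζ (by rw [h]; simp)
  have hHcoeff : H.coeff d ≠ 0 := by
    rw [hHdef, coeff_sub, coeff_C_mul, sub_ne_zero]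
    intro h
    have h1 : Complex.abs (μ * M.coeff d) = Complex.abs (P.coeff d) := by rw [h]
    rw [map_mul] at h1
    have h3 : 0 < Complex.abs (M.coeff d) := Complex.abs.pos hMc
    nlinarith [hcoeff]
  have hHdeg : H.natDegree = d := by
    apply le_antisymm
    · rw [hHdef]
      apply le_trans (natDegree_sub_le _ _)
      rw [max_le_iff]
      exact ⟨le_trans (natDegree_C_mul_le _ _) (le_of_eq hMdeg), hPd⟩
    · exact le_natDegree_of_ne_zero hHcoeff
  have hcard : Multiset.card H.roots = d := by
    rw [← hHdeg]
    exact (Polynomial.splits_iff_card_roots.mp (IsAlgClosed.splits H))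
  have hroots_in : ∀ r ∈ H.roots, Complex.abs r < 1 := by
    intro r hr
    by_contra hge
    push_neg at hge
    exact hHev r hge ((Polynomial.mem_roots hH0).mp hr)
  have hζnr : ∀ r ∈ H.roots, ζ ≠ r := by
    intro r hr h
    have := hroots_in r hr
    rw [← h, hζ] at this
    linarith
  have hWr : (derivative H).eval ζ * Q.eval ζ - H.eval ζ * (derivative Q).eval ζ = 0 := by
    have h1 : derivative H = C μ * derivative M - derivative P := by
      rw [hHdef, derivative_sub, derivative_C_mul]
    rw [h1, hHdef]
    simp only [eval_sub, eval_mul, eval_C]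
    have h2 : (μ * (derivative M).eval ζ - (derivative P).eval ζ) * Q.eval ζ -
        (μ * M.eval ζ - P.eval ζ) * (derivative Q).eval ζ = μ * T - W := by
      rw [hTdef, hWdef]; ring
    rw [h2, hμdef, div_mul_cancel₀ _ hT0, sub_self]
  have hdeq : dlog H ζ = dlog Q ζ := by
    unfold dlog
    rw [div_eq_div_iff hHζ hQζ]
    linear_combination hWr
  have hre : (ζ * dlog H ζ).re = (ζ * dlog Q ζ).re := by rw [hdeq]
  have hL : (ζ * dlog H ζ).re
      = ((H.roots).map (fun r => (ζ * (ζ - r)⁻¹).re)).sum := by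
    rw [dlog_eq_roots_sum H hH0 hζnr hHζ]
    rw [← Multiset.sum_map_mul_left, re_multiset_sum, Multiset.map_map]
    rfl
  have hLlb : (d : ℝ) / 2 < ((H.roots).map (fun r => (ζ * (ζ - r)⁻¹).re)).sum := by
    have hne : H.roots ≠ 0 := by
      intro h
      rw [h] at hcard
      simp at hcard
      omega
    have hlt := msum_lt H.roots (fun _ => 1/2) (fun r => (ζ * (ζ - r)⁻¹).re) hne ?_
    · have hconst : ((H.roots).map (fun _ => (1:ℝ)/2)).sum = (d : ℝ) * (1/2) := by
        rw [Multiset.map_const', Multiset.sum_replicate, hcard]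
        simp [nsmul_eq_mul]
      rw [hconst] at hlt
      linarith
    · intro r hr
      show (1:ℝ)/2 < (ζ * (ζ - r)⁻¹).re
      rw [re_key hζ (hζnr r hr)]
      have h1 : 0 < 1 - Complex.normSq r := by
        have h2 : Complex.normSq r < 1 := normSq_lt_one_iff.mpr (hroots_in r hr)
        linarith
      have h2 : 0 < Complex.normSq (ζ - r) :=
        Complex.normSq_pos.mpr (sub_ne_zero.mpr (hζnr r hr))
      have h3 : 0 < (1 - Complex.normSq r) / (2 * Complex.normSq (ζ - r)) := by positivity
      linarith
  have hR : (ζ * dlog Q ζ).re = (m : ℝ) / 2 - ((∑ j, tval j) + (∑ j, uval j)) / 2 := by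
    rw [hdlogQ, Finset.mul_sum, Complex.re_sum]
    rw [Finset.sum_congr rfl (fun j _ => re_key hζ (hzne j))]
    rw [Finset.sum_add_distrib]
    simp only [Finset.sum_const, Finset.card_univ, Fintype.card_fin, nsmul_eq_mul]
    have hgen : ∀ x y : ℝ, (1 - x) / (2 * y) = -((x - 1) / y) / 2 := by
      intro x y
      rw [← neg_div, neg_sub, div_div, mul_comm y 2]
    have h2 : ∀ j, (1 - Complex.normSq (z j)) / (2 * Complex.normSq (ζ - z j))
        = -(tval j + uval j) / 2 := by
      intro j
      rw [htvaldef, huvaldef]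
      by_cases h : Complex.normSq (z j) < 1
      · simp only [if_pos h, zero_add]
        exact hgen _ _
      · simp only [if_neg h, add_zero]
        exact hgen _ _
    rw [Finset.sum_congr rfl (fun j _ => h2 j)]
    rw [← Finset.sum_div, Finset.sum_neg_distrib, Finset.sum_add_distrib]
    ring
  have hRub : (ζ * dlog Q ζ).re ≤ (d : ℝ) / 2 := by
    rw [hR, hddef]
    push_cast
    linarith [hbr]
  rw [hL] at hre
  linarith [hLlb, hRub, hre]

set_option maxHeartbeats 1000000 in
/-- Branch "-": if `Σ₊ ≤ Σ₋` then `|W| ≤ Σ₋ · |Q(ζ)|²`. -/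
private lemma core_minus {m n : ℕ} {z : Fin m → ℂ} (hz : ∀ j, Complex.abs (z j) ≠ 1)
    {P : ℂ[X]} (hP : P.natDegree ≤ n)
    (hbd : ∀ u : ℂ, Complex.abs u = 1 →
      Complex.abs (P.eval u) ≤ Complex.abs ((∏ j, (X - C (z j)) : ℂ[X]).eval u))
    {ζ : ℂ} (hζ : Complex.abs ζ = 1)
    (hbr : ((n - m : ℕ) : ℝ) + (∑ j, (if Complex.normSq (z j) < 1 then 0 else
          (Complex.normSq (z j) - 1) / Complex.normSq (ζ - z j)))
        ≤ -(∑ j, (if Complex.normSq (z j) < 1 then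
          (Complex.normSq (z j) - 1) / Complex.normSq (ζ - z j) else 0)))
    (hdpos : 1 ≤ (n - m) + m) :
    Complex.abs ((derivative P).eval ζ * (∏ j, (X - C (z j)) : ℂ[X]).eval ζ
        - P.eval ζ * (derivative (∏ j, (X - C (z j)) : ℂ[X])).eval ζ)
      ≤ (-(∑ j, (if Complex.normSq (z j) < 1 then
          (Complex.normSq (z j) - 1) / Complex.normSq (ζ - z j) else 0)))
        * Complex.normSq ((∏ j, (X - C (z j)) : ℂ[X]).eval ζ) := by
  classical
  set Q : ℂ[X] := ∏ j, (X - C (z j)) with hQdef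
  set k : ℕ := n - m with hkdef
  set d : ℕ := k + m with hddef
  set tval : Fin m → ℝ := fun j => if Complex.normSq (z j) < 1 then 0 else
    (Complex.normSq (z j) - 1) / Complex.normSq (ζ - z j) with htvaldef
  set uval : Fin m → ℝ := fun j => if Complex.normSq (z j) < 1 then
    (Complex.normSq (z j) - 1) / Complex.normSq (ζ - z j) else 0 with huvaldef
  set Sm : ℝ := -(∑ j, uval j) with hSmdef
  set W : ℂ := (derivative P).eval ζ * Q.eval ζ - P.eval ζ * (derivative Q).eval ζ with hWdef
  have hζ0 : ζ ≠ 0 := by intro h; rw [h] at hζ; simp at hζ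
  have hzne : ∀ j, ζ ≠ z j := by
    intro j h
    exact hz j (h ▸ hζ)
  have hNj : ∀ j, Complex.normSq (ζ - z j) ≠ 0 := by
    intro j
    simpa [Complex.normSq_eq_zero, sub_eq_zero] using hzne j
  have hNjpos : ∀ j, 0 < Complex.normSq (ζ - z j) := by
    intro j
    exact lt_of_le_of_ne (Complex.normSq_nonneg _) (Ne.symm (hNj j))
  have hnsq_ne : ∀ j, Complex.normSq (z j) ≠ 1 := by
    intro j h
    apply hz j
    have := Complex.sq_abs (z j)
    rw [h] at this
    nlinarith [Complex.abs.nonneg (z j)]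
  have habs_gt : ∀ j, ¬ (Complex.normSq (z j) < 1) → 1 < Complex.abs (z j) := by
    intro j h
    have h1 : 1 < Complex.normSq (z j) := lt_of_le_of_ne (not_lt.mp h) (Ne.symm (hnsq_ne j))
    exact one_lt_normSq_iff.mp h1
  have habs_lt : ∀ j, Complex.normSq (z j) < 1 → Complex.abs (z j) < 1 :=
    fun j h => normSq_lt_one_iff.mp h
  have hQζ : Q.eval ζ ≠ 0 := Qcirc_ne hz hζ
  have hnQζpos : 0 < Complex.normSq (Q.eval ζ) := Complex.normSq_pos.mpr hQζ
  -- the comparison polynomial N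
  set gfac : Fin m → ℂ[X] := fun j => if Complex.normSq (z j) < 1 then
    C (-((starRingEnd ℂ) (z j))) * X + 1 else X - C (z j) with hgfacdef
  set N : ℂ[X] := ∏ j, gfac j with hNdef
  have hgfac_eval_ne : ∀ j, ∀ v : ℂ, Complex.abs v ≤ 1 → (gfac j).eval v ≠ 0 := by
    intro j v hv
    rw [hgfacdef]
    by_cases h : Complex.normSq (z j) < 1
    · simp only [if_pos h]
      apply lin_eval_ne
      rw [map_mul, Complex.abs_conj]
      have h1 := habs_lt j h
      have h2 : Complex.abs (z j) * Complex.abs v ≤ Complex.abs (z j) :=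
        mul_le_of_le_one_right (Complex.abs.nonneg (z j)) hv
      intro heq
      linarith
    · simp only [if_neg h, eval_sub, eval_X, eval_C, sub_ne_zero]
      intro h0
      have := habs_gt j h
      rw [← h0] at this
      linarith
  have hN_eval_ne : ∀ v : ℂ, Complex.abs v ≤ 1 → N.eval v ≠ 0 := by
    intro v hv
    rw [hNdef, eval_prod]
    exact Finset.prod_ne_zero_iff.mpr fun j _ => hgfac_eval_ne j v hv
  have hN_abs_circle : ∀ u : ℂ, Complex.abs u = 1 →
      Complex.abs (N.eval u) = Complex.abs (Q.eval u) := by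
    intro u hu
    rw [hNdef, hQdef, eval_prod, eval_prod, AbsoluteValue.map_prod, AbsoluteValue.map_prod]
    apply Finset.prod_congr rfl
    intro j _
    rw [hgfacdef]
    by_cases h : Complex.normSq (z j) < 1
    · simp only [if_pos h]
      rw [lin_abs_circle (z j) hu]
      simp
    · simp only [if_neg h]
  have hNdegle : N.natDegree ≤ m := by
    rw [hNdef]
    apply le_trans (Polynomial.natDegree_prod_le _ _)
    apply le_trans (Finset.sum_le_card_nsmul _ _ 1 ?_)
    · simp
    · intro j _
      rw [hgfacdef]
      by_cases h : Complex.normSq (z j) < 1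
      · simp only [if_pos h]
        exact lin_natDegree_le (z j)
      · simp only [if_neg h]
        exact le_of_eq (natDegree_X_sub_C (z j))
  have hint : ∀ v : ℂ, Complex.abs v ≤ 1 →
      Complex.abs (P.eval v) ≤ Complex.abs (N.eval v) := by
    apply poly_div_le hN_eval_ne
    intro u hu
    rw [hN_abs_circle u hu]
    exact hbd u hu
  -- dlog computations
  have hgfac_evalζ : ∀ j, (gfac j).eval ζ ≠ 0 := fun j => hgfac_eval_ne j ζ (le_of_eq hζ)
  have hNζ : N.eval ζ ≠ 0 := hN_eval_ne ζ (le_of_eq hζ)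
  have hdlogQ : dlog Q ζ = ∑ j, (ζ - z j)⁻¹ := by
    rw [hQdef, dlog_prod _ _ _ (fun j _ => by
      simp only [eval_sub, eval_X, eval_C, sub_ne_zero]; exact hzne j)]
    exact Finset.sum_congr rfl fun j _ => dlog_X_sub_C (z j) ζ
  have hdlogfac : ∀ j, dlog (gfac j) ζ - (ζ - z j)⁻¹
      = (starRingEnd ℂ) ζ * ((uval j : ℝ) : ℂ) := by
    intro j
    rw [hgfacdef, huvaldef]
    by_cases h : Complex.normSq (z j) < 1
    · simp only [if_pos h]
      rw [dlog_lin (one_sub_conj_ne hζ (hzne j))]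
      exact I1 hζ (hzne j)
    · simp only [if_neg h]
      rw [dlog_X_sub_C]
      simp
  have hdlogN : dlog N ζ - dlog Q ζ = (starRingEnd ℂ) ζ * ((-(Sm : ℝ) : ℝ) : ℂ) := by
    have h1 : dlog N ζ = ∑ j, dlog (gfac j) ζ := by
      rw [hNdef, dlog_prod _ _ _ (fun j _ => hgfac_evalζ j)]
    rw [h1, hdlogQ, ← Finset.sum_sub_distrib]
    have h2 : ∑ j, (dlog (gfac j) ζ - (ζ - z j)⁻¹)
        = (starRingEnd ℂ) ζ * ∑ j, ((uval j : ℝ) : ℂ) := by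
      rw [Finset.mul_sum]
      exact Finset.sum_congr rfl fun j _ => hdlogfac j
    rw [h2, hSmdef]
    push_cast
    ring
  -- positivity of Sm
  have hrpos : ∀ j, 0 < tval j - uval j := by
    intro j
    rw [htvaldef, huvaldef]
    by_cases h : Complex.normSq (z j) < 1
    · simp only [if_pos h, zero_sub, sub_zero, neg_pos]
      apply div_neg_of_neg_of_pos
      · linarith
      · exact hNjpos j
    · simp only [if_neg h, sub_zero]
      apply div_pos
      · have h2 : 1 ≤ Complex.normSq (z j) := not_lt.mp h
        rcases lt_or_eq_of_le h2 with h3 | h3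
        · linarith
        · exact absurd h3.symm (hnsq_ne j)
      · exact hNjpos j
  have hpos_total : 0 < (k : ℝ) + ∑ j, (tval j - uval j) := by
    rcases Nat.eq_zero_or_pos m with hm | hm
    · have hk1 : 1 ≤ k := by omega
      have hsum0 : (∑ j, (tval j - uval j)) = 0 := by
        subst hm
        simp
      rw [hsum0]
      have : (1:ℝ) ≤ (k:ℝ) := by exact_mod_cast hk1
      linarith
    · have hpos : 0 < ∑ j, (tval j - uval j) :=
        Finset.sum_pos (fun j _ => hrpos j) ⟨⟨0, hm⟩, Finset.mem_univ _⟩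
      have : (0:ℝ) ≤ (k:ℝ) := Nat.cast_nonneg k
      linarith
  have htsum_nonneg : 0 ≤ ∑ j, tval j := by
    apply Finset.sum_nonneg
    intro j _
    rw [htvaldef]
    by_cases h : Complex.normSq (z j) < 1
    · simp [if_pos h]
    · simp only [if_neg h]
      apply div_nonneg
      · linarith [not_lt.mp h]
      · exact le_of_lt (hNjpos j)
  have hsumsplit : (∑ j, (tval j - uval j)) = (∑ j, tval j) - (∑ j, uval j) :=
    Finset.sum_sub_distrib _ _
  have hSmpos : 0 < Sm := by
    have h1 : (0:ℝ) ≤ (k:ℝ) := Nat.cast_nonneg k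
    have h2 : Sm = -(∑ j, uval j) := hSmdef
    linarith [hbr, hpos_total, hsumsplit, htsum_nonneg]
  -- the Wronskian T of (N, Q)
  set T : ℂ := (derivative N).eval ζ * Q.eval ζ - N.eval ζ * (derivative Q).eval ζ with hTdef
  have hTval : T = (starRingEnd ℂ) ζ * ((-(Sm : ℝ) : ℝ) : ℂ) * (N.eval ζ * Q.eval ζ) := by
    have h1 : T = (dlog N ζ - dlog Q ζ) * (N.eval ζ * Q.eval ζ) := by
      unfold dlog
      rw [hTdef]
      field_simp
    rw [h1, hdlogN]
  have habsT : Complex.abs T = Sm * Complex.normSq (Q.eval ζ) := by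
    rw [hTval, map_mul, map_mul, map_mul, Complex.abs_conj, hζ, one_mul, Complex.abs_ofReal,
      hN_abs_circle ζ hζ, Complex.mul_self_abs]
    rw [abs_neg, abs_of_pos hSmpos]
  -- main contradiction
  by_contra hcon
  push_neg at hcon
  have hT0 : T ≠ 0 := by
    intro h
    rw [h, map_zero] at habsT
    nlinarith [hSmpos, hnQζpos]
  set μ : ℂ := W / T with hμdef
  have habsμ : 1 < Complex.abs μ := by
    rw [hμdef, map_div₀, habsT, lt_div_iff₀ (by positivity)]
    linarith
  set H : ℂ[X] := C μ * N - P with hHdef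
  have hHev : ∀ v : ℂ, Complex.abs v ≤ 1 → H.eval v ≠ 0 := by
    intro v hv
    rw [hHdef, eval_sub, eval_mul, eval_C, sub_ne_zero]
    intro h
    have h1 : Complex.abs (μ * N.eval v) = Complex.abs (P.eval v) := by rw [h]
    rw [map_mul] at h1
    have h2 := hint v hv
    have h3 : 0 < Complex.abs (N.eval v) := Complex.abs.pos (hN_eval_ne v hv)
    nlinarith
  have hHζ : H.eval ζ ≠ 0 := hHev ζ (le_of_eq hζ)
  have hH0 : H ≠ 0 := fun h => hHζ (by rw [h]; simp)
  have hHdegle : H.natDegree ≤ d := by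
    rw [hHdef]
    apply le_trans (natDegree_sub_le _ _)
    rw [max_le_iff]
    constructor
    · apply le_trans (natDegree_C_mul_le _ _)
      apply le_trans hNdegle
      omega
    · apply le_trans hP
      omega
  have hcard : Multiset.card H.roots = H.natDegree :=
    Polynomial.splits_iff_card_roots.mp (IsAlgClosed.splits H)
  have hroots_out : ∀ r ∈ H.roots, 1 < Complex.abs r := by
    intro r hr
    by_contra hge
    push_neg at hge
    exact hHev r hge ((Polynomial.mem_roots hH0).mp hr)
  have hζnr : ∀ r ∈ H.roots, ζ ≠ r := by
    intro r hr h
    have := hroots_out r hr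
    rw [← h, hζ] at this
    linarith
  have hWr : (derivative H).eval ζ * Q.eval ζ - H.eval ζ * (derivative Q).eval ζ = 0 := by
    have h1 : derivative H = C μ * derivative N - derivative P := by
      rw [hHdef, derivative_sub, derivative_C_mul]
    rw [h1, hHdef]
    simp only [eval_sub, eval_mul, eval_C]
    have h2 : (μ * (derivative N).eval ζ - (derivative P).eval ζ) * Q.eval ζ -
        (μ * N.eval ζ - P.eval ζ) * (derivative Q).eval ζ = μ * T - W := by
      rw [hTdef, hWdef]; ring
    rw [h2, hμdef, div_mul_cancel₀ _ hT0, sub_self]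
  have hdeq : dlog H ζ = dlog Q ζ := by
    unfold dlog
    rw [div_eq_div_iff hHζ hQζ]
    linear_combination hWr
  have hre : (ζ * dlog H ζ).re = (ζ * dlog Q ζ).re := by rw [hdeq]
  have hL : (ζ * dlog H ζ).re
      = ((H.roots).map (fun r => (ζ * (ζ - r)⁻¹).re)).sum := by
    rw [dlog_eq_roots_sum H hH0 hζnr hHζ]
    rw [← Multiset.sum_map_mul_left, re_multiset_sum, Multiset.map_map]
    rfl
  have hdhalfpos : (0:ℝ) < (d : ℝ) / 2 := by
    have : (1:ℝ) ≤ (d:ℝ) := by exact_mod_cast hdpos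
    linarith
  have hLub : ((H.roots).map (fun r => (ζ * (ζ - r)⁻¹).re)).sum < (d : ℝ) / 2 := by
    rcases eq_or_ne H.roots 0 with h0 | h0
    · rw [h0]
      simpa using hdhalfpos
    · have hlt := msum_lt H.roots (fun r => (ζ * (ζ - r)⁻¹).re) (fun _ => 1/2) h0 ?_
      · have hconst : ((H.roots).map (fun _ => (1:ℝ)/2)).sum
            = (Multiset.card H.roots : ℝ) * (1/2) := by
          rw [Multiset.map_const', Multiset.sum_replicate]
          simp [nsmul_eq_mul]
        rw [hconst] at hlt
        have hcle : (Multiset.card H.roots : ℝ) ≤ (d : ℝ) := by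
          rw [hcard]
          exact_mod_cast hHdegle
        calc ((H.roots).map (fun r => (ζ * (ζ - r)⁻¹).re)).sum
            < (Multiset.card H.roots : ℝ) * (1/2) := hlt
          _ ≤ (d : ℝ) * (1/2) := by linarith
          _ = (d : ℝ) / 2 := by ring
      · intro r hr
        show (ζ * (ζ - r)⁻¹).re < (1:ℝ)/2
        rw [re_key hζ (hζnr r hr)]
        have h1 : 1 - Complex.normSq r < 0 := by
          have h2 : 1 < Complex.normSq r := one_lt_normSq_iff.mpr (hroots_out r hr)
          linarith
        have h2 : 0 < Complex.normSq (ζ - r) :=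
          Complex.normSq_pos.mpr (sub_ne_zero.mpr (hζnr r hr))
        have h3 : (1 - Complex.normSq r) / (2 * Complex.normSq (ζ - r)) < 0 := by
          apply div_neg_of_neg_of_pos h1
          linarith
        linarith
  have hgen : ∀ x y : ℝ, (1 - x) / (2 * y) = -((x - 1) / y) / 2 := by
    intro x y
    rw [← neg_div, neg_sub, div_div, mul_comm y 2]
  have hR : (ζ * dlog Q ζ).re = (m : ℝ) / 2 - ((∑ j, tval j) + (∑ j, uval j)) / 2 := by
    rw [hdlogQ, Finset.mul_sum, Complex.re_sum]
    rw [Finset.sum_congr rfl (fun j _ => re_key hζ (hzne j))]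
    rw [Finset.sum_add_distrib]
    simp only [Finset.sum_const, Finset.card_univ, Fintype.card_fin, nsmul_eq_mul]
    have h2 : ∀ j, (1 - Complex.normSq (z j)) / (2 * Complex.normSq (ζ - z j))
        = -(tval j + uval j) / 2 := by
      intro j
      rw [htvaldef, huvaldef]
      by_cases h : Complex.normSq (z j) < 1
      · simp only [if_pos h, zero_add]
        exact hgen _ _
      · simp only [if_neg h, add_zero]
        exact hgen _ _
    rw [Finset.sum_congr rfl (fun j _ => h2 j)]
    rw [← Finset.sum_div, Finset.sum_neg_distrib, Finset.sum_add_distrib]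
    ring
  have hRlb : (d : ℝ) / 2 ≤ (ζ * dlog Q ζ).re := by
    rw [hR, hddef]
    push_cast
    linarith [hbr]
  rw [hL] at hre
  linarith [hLub, hRlb, hre]

/-- The pointwise Bernstein-type inequality for rational functions on the unit circle. -/
private lemma core {m n : ℕ} {z : Fin m → ℂ} (hz : ∀ j, Complex.abs (z j) ≠ 1)
    {P : ℂ[X]} (hP : P.natDegree ≤ n)
    (hbd : ∀ u : ℂ, Complex.abs u = 1 →
      Complex.abs (P.eval u) ≤ Complex.abs ((∏ j, (X - C (z j)) : ℂ[X]).eval u))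
    {ζ : ℂ} (hζ : Complex.abs ζ = 1) :
    Complex.abs ((derivative P).eval ζ * (∏ j, (X - C (z j)) : ℂ[X]).eval ζ
        - P.eval ζ * (derivative (∏ j, (X - C (z j)) : ℂ[X])).eval ζ)
      ≤ (((n - m : ℕ) : ℝ) + ∑ j, |1 - Complex.normSq (z j)| / Complex.normSq (ζ - z j))
        * Complex.normSq ((∏ j, (X - C (z j)) : ℂ[X]).eval ζ) := by
  classical
  rcases Nat.eq_zero_or_pos ((n - m) + m) with hd0 | hdpos
  · -- degenerate case : m = 0 and n = 0
    have hm : m = 0 := by omega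
    have hn : n = 0 := by omega
    subst hm
    have hP0 : P = C (P.coeff 0) := Polynomial.eq_C_of_natDegree_le_zero (by omega)
    subst hn
    rw [hP0]
    simp only [Finset.univ_eq_empty, Finset.prod_empty, Finset.sum_empty, derivative_one,
      derivative_C, eval_zero, eval_one, mul_one, mul_zero, sub_zero, zero_mul, map_zero]
    norm_num [Complex.normSq_one]
  · have hzne : ∀ j, ζ ≠ z j := by
      intro j h
      exact hz j (h ▸ hζ)
    have hNjpos : ∀ j, 0 < Complex.normSq (ζ - z j) := by
      intro j
      apply Complex.normSq_pos.mpr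
      exact sub_ne_zero.mpr (hzne j)
    have hnsq_ne : ∀ j, Complex.normSq (z j) ≠ 1 := by
      intro j h
      apply hz j
      have := Complex.sq_abs (z j)
      rw [h] at this
      nlinarith [Complex.abs.nonneg (z j)]
    have htr : ∀ j, (if Complex.normSq (z j) < 1 then 0 else
        (Complex.normSq (z j) - 1) / Complex.normSq (ζ - z j))
        ≤ |1 - Complex.normSq (z j)| / Complex.normSq (ζ - z j) := by
      intro j
      by_cases h : Complex.normSq (z j) < 1
      · simp only [if_pos h]
        exact div_nonneg (abs_nonneg _) (Complex.normSq_nonneg _)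
      · simp only [if_neg h]
        rw [_root_.abs_of_nonpos (by linarith [not_lt.mp h] : 1 - Complex.normSq (z j) ≤ 0),
          neg_sub]
    have hur : ∀ j, -(if Complex.normSq (z j) < 1 then
        (Complex.normSq (z j) - 1) / Complex.normSq (ζ - z j) else 0)
        ≤ |1 - Complex.normSq (z j)| / Complex.normSq (ζ - z j) := by
      intro j
      by_cases h : Complex.normSq (z j) < 1
      · simp only [if_pos h]
        rw [_root_.abs_of_nonneg (by linarith : (0:ℝ) ≤ 1 - Complex.normSq (z j)), ← neg_div,
          neg_sub]
      · simp only [if_neg h, neg_zero]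
        exact div_nonneg (abs_nonneg _) (Complex.normSq_nonneg _)
    rcases le_total
      (-(∑ j, (if Complex.normSq (z j) < 1 then
        (Complex.normSq (z j) - 1) / Complex.normSq (ζ - z j) else 0)))
      (((n - m : ℕ) : ℝ) + ∑ j, (if Complex.normSq (z j) < 1 then 0 else
        (Complex.normSq (z j) - 1) / Complex.normSq (ζ - z j))) with hbr | hbr
    · apply le_trans (core_plus hz hP hbd hζ hbr hdpos)
      apply mul_le_mul_of_nonneg_right ?_ (Complex.normSq_nonneg _)
      exact add_le_add_right (Finset.sum_le_sum fun j _ => htr j) _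
    · apply le_trans (core_minus hz hP hbd hζ hbr hdpos)
      apply mul_le_mul_of_nonneg_right ?_ (Complex.normSq_nonneg _)
      calc -(∑ j, (if Complex.normSq (z j) < 1 then
            (Complex.normSq (z j) - 1) / Complex.normSq (ζ - z j) else 0))
          = ∑ j, -(if Complex.normSq (z j) < 1 then
            (Complex.normSq (z j) - 1) / Complex.normSq (ζ - z j) else 0) :=
            (Finset.sum_neg_distrib _).symm
        _ ≤ ∑ j, |1 - Complex.normSq (z j)| / Complex.normSq (ζ - z j) :=
            Finset.sum_le_sum fun j _ => hur j
        _ ≤ ((n - m : ℕ) : ℝ) + ∑ j, |1 - Complex.normSq (z j)| / Complex.normSq (ζ - z j) :=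
            le_add_of_nonneg_left (Nat.cast_nonneg _)

/-! ### Poisson integrals -/

private lemma abs_exp_neg (θ : ℝ) : Complex.abs (Complex.exp (-((θ:ℂ) * Complex.I))) = 1 := by
  have h : -((θ:ℂ) * Complex.I) = ((-θ : ℝ) : ℂ) * Complex.I := by push_cast; ring
  rw [h, Complex.abs_exp_ofReal_mul_I]

private lemma exp_circle_ne {a : ℂ} (ha : Complex.abs a ≠ 1) (θ : ℝ) :
    Complex.exp ((θ:ℂ) * Complex.I) ≠ a := by
  intro h
  apply ha
  rw [← h, Complex.abs_exp_ofReal_mul_I]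

private lemma poisson_integrand_eq {a : ℂ} (ha : Complex.abs a < 1) (θ : ℝ) :
    |1 - Complex.normSq a| / Complex.normSq (Complex.exp ((θ:ℂ) * Complex.I) - a)
      = 2 * ((1 - a * Complex.exp (-((θ:ℂ) * Complex.I)))⁻¹).re - 1 := by
  set ζ := Complex.exp ((θ:ℂ) * Complex.I) with hζdef
  have hζ : Complex.abs ζ = 1 := Complex.abs_exp_ofReal_mul_I θ
  have hne : ζ ≠ a := exp_circle_ne (ne_of_lt ha) θ
  have hζ0 : ζ ≠ 0 := Complex.exp_ne_zero _
  have hsub : ζ - a ≠ 0 := sub_ne_zero.mpr hne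
  have hNa : Complex.normSq a < 1 := normSq_lt_one_iff.mpr ha
  have h1 : ζ * (ζ - a)⁻¹ = (1 - a * Complex.exp (-((θ:ℂ) * Complex.I)))⁻¹ := by
    have hexp : Complex.exp (-((θ:ℂ) * Complex.I)) = ζ⁻¹ := by
      rw [Complex.exp_neg]
    rw [hexp]
    have h2 : 1 - a * ζ⁻¹ = (ζ - a) * ζ⁻¹ := by
      field_simp
    rw [h2, mul_inv, inv_inv, mul_comm]
  rw [← h1, re_key hζ hne, _root_.abs_of_nonneg (by linarith : (0:ℝ) ≤ 1 - Complex.normSq a)]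
  ring

private lemma poisson_slit {a : ℂ} (ha : Complex.abs a < 1) (w : ℂ)
    (hw : Complex.abs (Complex.exp (-(w * Complex.I))) = 1) :
    (1 - a * Complex.exp (-(w * Complex.I))) ∈ Complex.slitPlane := by
  rw [Complex.mem_slitPlane_iff]
  left
  have h1 : (1 - a * Complex.exp (-(w * Complex.I))).re
      = 1 - (a * Complex.exp (-(w * Complex.I))).re := by
    simp [Complex.sub_re]
  rw [h1]
  have h2 : (a * Complex.exp (-(w * Complex.I))).re ≤ Complex.abs a := by
    calc (a * Complex.exp (-(w * Complex.I))).re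
        ≤ Complex.abs (a * Complex.exp (-(w * Complex.I))) := Complex.re_le_abs _
      _ = Complex.abs a := by rw [map_mul, hw, mul_one]
  linarith

private lemma poisson_hasDeriv {a : ℂ} (ha : Complex.abs a < 1) (θ : ℝ) :
    HasDerivAt (fun t : ℝ =>
      t - 2 * (Complex.I * Complex.log (1 - a * Complex.exp (-((t:ℂ) * Complex.I)))).re)
      (|1 - Complex.normSq a| / Complex.normSq (Complex.exp ((θ:ℂ) * Complex.I) - a)) θ := by
  set D := 1 - a * Complex.exp (-((θ:ℂ) * Complex.I)) with hDdef
  have hsl : D ∈ Complex.slitPlane := poisson_slit ha θ (abs_exp_neg θ)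
  have hD0 : D ≠ 0 := Complex.slitPlane_ne_zero hsl
  -- complex derivative of w ↦ w - 2 I log (1 - a exp(-w I)) at w = θ
  have hinner : HasDerivAt (fun w : ℂ => 1 - a * Complex.exp (-(w * Complex.I)))
      (-(a * (Complex.exp (-((θ:ℂ) * Complex.I)) * -Complex.I))) (θ:ℂ) := by
    have h1 : HasDerivAt (fun w : ℂ => -(w * Complex.I)) (-Complex.I) (θ:ℂ) := by
      simpa [Pi.neg_def] using ((hasDerivAt_id ((θ:ℂ))).mul_const Complex.I).neg
    have h2 := h1.cexp
    have h3 := (h2.const_mul a).const_sub 1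
    convert h3 using 1
  have hlog := (hinner.clog hsl)
  have hid : HasDerivAt (fun w : ℂ => w) 1 (θ:ℂ) := hasDerivAt_id _
  have hfull := (hid.sub ((hlog.const_mul Complex.I).const_mul 2))
  have hre := hfull.real_of_complex
  have hval : ((1:ℂ) - 2 * (Complex.I * (-(a * (Complex.exp (-((θ:ℂ) * Complex.I)) * -Complex.I)) / D))).re
      = |1 - Complex.normSq a| / Complex.normSq (Complex.exp ((θ:ℂ) * Complex.I) - a) := by
    have hI : Complex.I * Complex.I = -1 := Complex.I_mul_I
    have he : (1:ℂ) - 2 * (Complex.I * (-(a * (Complex.exp (-((θ:ℂ) * Complex.I)) * -Complex.I)) / D))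
        = 1 + 2 * (a * Complex.exp (-((θ:ℂ) * Complex.I)) / D) := by
      linear_combination (-(2 * a * Complex.exp (-((θ:ℂ) * Complex.I)) / D)) * hI
    have h5 : (1:ℂ) + 2 * (a * Complex.exp (-((θ:ℂ) * Complex.I)) / D) = 2 * D⁻¹ - 1 := by
      have hae : a * Complex.exp (-((θ:ℂ) * Complex.I)) = 1 - D := by rw [hDdef]; ring
      rw [hae]
      field_simp
      ring
    have h3 : (1:ℂ) - 2 * (Complex.I * (-(a * (Complex.exp (-((θ:ℂ) * Complex.I)) * -Complex.I)) / D))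
        = 2 * D⁻¹ - 1 := he.trans h5
    rw [h3, poisson_integrand_eq ha θ]
    rw [← hDdef]
    simp [Complex.sub_re, Complex.mul_re]
  rw [← hval]
  have hfun : (fun x : ℝ => (((x:ℂ))
        - 2 * (Complex.I * Complex.log (1 - a * Complex.exp (-((x:ℂ) * Complex.I))))).re)
      = (fun t : ℝ =>
        t - 2 * (Complex.I * Complex.log (1 - a * Complex.exp (-((t:ℂ) * Complex.I)))).re) := by
    funext x
    simp [Complex.sub_re, Complex.mul_re]
  rw [← hfun]
  exact hre

private lemma poisson_cont (a : ℂ) (ha : Complex.abs a ≠ 1) :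
    Continuous (fun θ : ℝ =>
      |1 - Complex.normSq a| / Complex.normSq (Complex.exp ((θ:ℂ) * Complex.I) - a)) := by
  apply Continuous.div continuous_const
  · apply Complex.continuous_normSq.comp
    apply Continuous.sub ?_ continuous_const
    apply Complex.continuous_exp.comp
    exact (Complex.continuous_ofReal).mul continuous_const
  · intro θ
    intro h
    exact (exp_circle_ne ha θ) (sub_eq_zero.mp (Complex.normSq_eq_zero.mp h))

private lemma poisson_int_lt {a : ℂ} (ha : Complex.abs a < 1) :
    ∫ θ in (0:ℝ)..(2*π),
      |1 - Complex.normSq a| / Complex.normSq (Complex.exp ((θ:ℂ) * Complex.I) - a) = 2*π := by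
  rw [intervalIntegral.integral_eq_sub_of_hasDerivAt (fun θ _ => poisson_hasDeriv ha θ)
    ((poisson_cont a (ne_of_lt ha)).intervalIntegrable _ _)]
  have h2pi : Complex.exp (-(((2*π : ℝ):ℂ) * Complex.I)) = 1 := by
    rw [Complex.exp_neg]
    have : (((2*π : ℝ):ℂ) * Complex.I) = 2 * (π:ℂ) * Complex.I := by push_cast; ring
    rw [this, Complex.exp_two_pi_mul_I, inv_one]
  have h0 : Complex.exp (-(((0:ℝ):ℂ) * Complex.I)) = 1 := by
    simp
  rw [h2pi, h0]
  ring

private lemma reflect_integrand {a u : ℂ} (h : 1 < Complex.abs a) (hu : Complex.abs u = 1) :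
    |1 - Complex.normSq (((starRingEnd ℂ) a)⁻¹)| / Complex.normSq (u - ((starRingEnd ℂ) a)⁻¹)
      = |1 - Complex.normSq a| / Complex.normSq (u - a) := by
  have ha0 : a ≠ 0 := by
    intro h0; rw [h0] at h; simp at h; linarith
  have hca : (starRingEnd ℂ) a ≠ 0 := by simpa using ha0
  have hNa : 1 < Complex.normSq a := one_lt_normSq_iff.mpr h
  have hNapos : 0 < Complex.normSq a := by linarith
  have hsubne : u - a ≠ 0 := by
    intro h0
    rw [sub_eq_zero] at h0
    rw [← h0, hu] at h
    linarith
  have hN : 0 < Complex.normSq (u - a) := Complex.normSq_pos.mpr hsubne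
  -- normSq of reflected point
  have hb : Complex.normSq (((starRingEnd ℂ) a)⁻¹) = (Complex.normSq a)⁻¹ := by
    rw [Complex.normSq_inv, Complex.normSq_conj]
  -- u - b = (conj a)⁻¹ * (conj a * u - 1)
  have hfac : u - ((starRingEnd ℂ) a)⁻¹ = ((starRingEnd ℂ) a)⁻¹ * ((starRingEnd ℂ) a * u - 1) := by
    field_simp
  have hns : Complex.normSq (u - ((starRingEnd ℂ) a)⁻¹)
      = Complex.normSq (u - a) / Complex.normSq a := by
    rw [hfac, Complex.normSq_mul, Complex.normSq_inv, Complex.normSq_conj]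
    have h1 : (starRingEnd ℂ) a * u - 1 = -(1 - (starRingEnd ℂ) a * u) := by ring
    rw [h1, Complex.normSq_neg]
    have h2 : Complex.normSq (1 - (starRingEnd ℂ) a * u) = Complex.normSq (u - a) := by
      rw [Complex.normSq_eq_abs, Complex.normSq_eq_abs, abs_one_sub_conj hu]
    rw [h2]
    ring
  rw [hb, hns]
  rw [_root_.abs_of_nonpos (by linarith : 1 - Complex.normSq a ≤ 0)]
  have hinvlt : (Complex.normSq a)⁻¹ < 1 := by
    rw [inv_lt_one_iff₀]
    right; exact hNa
  rw [_root_.abs_of_nonneg (by linarith : (0:ℝ) ≤ 1 - (Complex.normSq a)⁻¹)]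
  rw [div_div_eq_mul_div]
  have hnum : (1 - (Complex.normSq a)⁻¹) * Complex.normSq a = -(1 - Complex.normSq a) := by
    have h9 := ne_of_gt hNapos
    field_simp
    ring
  rw [hnum]

private lemma poisson_int {a : ℂ} (ha : Complex.abs a ≠ 1) :
    ∫ θ in (0:ℝ)..(2*π),
      |1 - Complex.normSq a| / Complex.normSq (Complex.exp ((θ:ℂ) * Complex.I) - a) = 2*π := by
  rcases lt_or_gt_of_ne ha with h | h
  · exact poisson_int_lt h
  · have ha0 : a ≠ 0 := by
      intro h0; rw [h0] at h; simp at h; linarith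
    have hb1 : Complex.abs (((starRingEnd ℂ) a)⁻¹) < 1 := by
      rw [map_inv₀, Complex.abs_conj]
      rw [inv_lt_one_iff₀]
      right; exact h
    have hpt : ∀ θ ∈ Set.uIcc (0:ℝ) (2*π),
        |1 - Complex.normSq a| / Complex.normSq (Complex.exp ((θ:ℂ) * Complex.I) - a)
        = |1 - Complex.normSq (((starRingEnd ℂ) a)⁻¹)|
          / Complex.normSq (Complex.exp ((θ:ℂ) * Complex.I) - ((starRingEnd ℂ) a)⁻¹) := by
      intro θ _
      exact (reflect_integrand h (Complex.abs_exp_ofReal_mul_I θ)).symm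
    rw [intervalIntegral.integral_congr hpt]
    exact poisson_int_lt hb1

end Spijker

end

open Complex Polynomial Spijker in
theorem stmt_7 (V : Type*) [NormedAddCommGroup V] [NormedSpace ℂ V]
    (m n : ℕ) (z : Fin m → ℂ) (hz : ∀ j, ‖z j‖ ≠ 1)
    (A : ℂ → V) (c : ℕ → V)
    (hA : ∀ w : ℂ, w ∉ Set.range z →
      (∏ j, (w - z j)) • A w = ∑ k ∈ Finset.range (n + 1), w ^ k • c k)
    (hA1 : ∀ w : ℂ, ‖w‖ = 1 → ‖A w‖ ≤ 1) :
    ∫ θ in (0 : ℝ)..(2 * π), ‖deriv A (Complex.exp (θ * Complex.I))‖ ≤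
      2 * π * (max m n : ℕ) := by
  classical
  set Q : Polynomial ℂ := ∏ j, (Polynomial.X - Polynomial.C (z j)) with hQdef
  have hQeval : ∀ u : ℂ, Q.eval u = ∏ j, (u - z j) := by
    intro u
    rw [hQdef, eval_prod]
    exact Finset.prod_congr rfl fun j _ => by simp
  have hQne : ∀ u : ℂ, u ∉ Set.range z → Q.eval u ≠ 0 := by
    intro u hu
    rw [hQeval]
    apply Finset.prod_ne_zero_iff.mpr
    intro j _
    rw [sub_ne_zero]
    intro h
    exact hu ⟨j, h.symm⟩
  have hcirc_mem : ∀ u : ℂ, Complex.abs u = 1 → u ∉ Set.range z := by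
    intro u hu ⟨j, hj⟩
    exact hz j (by rw [hj]; exact hu)
  set Pv : ℂ → V := fun u => ∑ k ∈ Finset.range (n + 1), u ^ k • c k with hPvdef
  set PvD : ℂ → V := fun u => ∑ k ∈ Finset.range (n + 1), ((k : ℂ) * u ^ (k - 1)) • c k
    with hPvDdef
  set R : ℂ → V := fun u => (Q.eval u)⁻¹ • Pv u with hRdef
  set DR : ℂ → V := fun u => (Q.eval u)⁻¹ • PvD u
    + (-(Q.derivative.eval u) / (Q.eval u) ^ 2) • Pv u with hDRdef
  have hAR : ∀ u : ℂ, u ∉ Set.range z → A u = R u := by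
    intro u hu
    have h1 := hA u hu
    rw [← hQeval] at h1
    rw [hRdef]
    simp only
    rw [hPvdef]
    simp only
    rw [← h1, inv_smul_smul₀ (hQne u hu)]
  have hPvD : ∀ u : ℂ, HasDerivAt Pv (PvD u) u := by
    intro u
    apply HasDerivAt.fun_sum
    intro k _
    exact (hasDerivAt_pow k u).smul_const (c k)
  have hRD : ∀ u : ℂ, Q.eval u ≠ 0 → HasDerivAt R (DR u) u := by
    intro u hu
    have hinv : HasDerivAt (fun x : ℂ => (Q.eval x)⁻¹)
        (-(Q.derivative.eval u) / (Q.eval u) ^ 2) u := by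
      have := (Polynomial.hasDerivAt Q u).inv hu
      exact this
    have := hinv.smul (hPvD u)
    convert this using 1
    rfl
  have hderivA : ∀ u : ℂ, u ∉ Set.range z → deriv A u = DR u := by
    intro u hu
    have hopen : IsOpen ((Set.range z)ᶜ) := (Set.finite_range z).isClosed.isOpen_compl
    have hev : A =ᶠ[nhds u] R :=
      Filter.eventuallyEq_of_mem (hopen.mem_nhds hu) (fun x hx => hAR x hx)
    rw [hev.deriv_eq]
    exact (hRD u (hQne u hu)).deriv
  -- the pointwise bound
  set w : ℝ → ℝ := fun θ => ((n - m : ℕ) : ℝ) + ∑ j,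
    |1 - Complex.normSq (z j)| / Complex.normSq (Complex.exp ((θ:ℝ) * Complex.I) - z j)
    with hwdef
  have hwnonneg : ∀ θ, 0 ≤ w θ := by
    intro θ
    rw [hwdef]
    apply add_nonneg (Nat.cast_nonneg _)
    apply Finset.sum_nonneg
    intro j _
    exact div_nonneg (abs_nonneg _) (Complex.normSq_nonneg _)
  have hpoint : ∀ θ : ℝ, ‖deriv A (Complex.exp ((θ:ℝ) * Complex.I))‖ ≤ w θ := by
    intro θ
    set ζ : ℂ := Complex.exp ((θ:ℝ) * Complex.I) with hζdef
    have hζabs : Complex.abs ζ = 1 := Complex.abs_exp_ofReal_mul_I θ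
    have hζmem : ζ ∉ Set.range z := hcirc_mem ζ hζabs
    have hQζ : Q.eval ζ ≠ 0 := hQne ζ hζmem
    rw [hderivA ζ hζmem]
    rcases eq_or_ne (DR ζ) 0 with h0 | h0
    · rw [h0, norm_zero]
      exact hwnonneg θ
    obtain ⟨φ, hφ1, hφv⟩ := exists_dual_vector ℂ (DR ζ) (norm_ne_zero_iff.mpr h0)
    set P : Polynomial ℂ := ∑ i ∈ Finset.range (n + 1), C (φ (c i)) * X ^ i with hPdef
    have hPdeg : P.natDegree ≤ n := by
      rw [hPdef]
      apply Polynomial.natDegree_sum_le_of_forall_le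
      intro i hi
      apply le_trans (natDegree_C_mul_le _ _)
      rw [natDegree_X_pow]
      exact Nat.lt_succ_iff.mp (Finset.mem_range.mp hi)
    have hφPv : ∀ u : ℂ, φ (Pv u) = P.eval u := by
      intro u
      rw [hPvdef, hPdef]
      simp only
      rw [map_sum, eval_finset_sum]
      apply Finset.sum_congr rfl
      intro i _
      rw [map_smul, smul_eq_mul, eval_mul, eval_C, eval_pow, eval_X]
      ring
    have hφPvD : ∀ u : ℂ, φ (PvD u) = P.derivative.eval u := by
      intro u
      rw [hPvDdef, hPdef]
      simp only
      rw [map_sum, derivative_sum, eval_finset_sum]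
      apply Finset.sum_congr rfl
      intro i _
      rw [map_smul, smul_eq_mul, derivative_C_mul, derivative_X_pow, eval_mul, eval_C,
        eval_mul, eval_C, eval_pow, eval_X]
      ring
    have hbd : ∀ u : ℂ, Complex.abs u = 1 →
        Complex.abs (P.eval u) ≤ Complex.abs (Q.eval u) := by
      intro u hu
      rw [← hφPv u]
      have hmem := hcirc_mem u hu
      have h1 : Pv u = Q.eval u • A u := by
        rw [hPvdef]
        simp only
        rw [← hA u hmem, hQeval]
      rw [h1, map_smul, smul_eq_mul, map_mul]
      have h2 : Complex.abs (φ (A u)) ≤ 1 := by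
        rw [← Complex.norm_eq_abs]
        calc ‖φ (A u)‖ ≤ ‖φ‖ * ‖A u‖ := φ.le_opNorm _
          _ = ‖A u‖ := by rw [hφ1, one_mul]
          _ ≤ 1 := hA1 u hu
      calc Complex.abs (Q.eval u) * Complex.abs (φ (A u))
          ≤ Complex.abs (Q.eval u) * 1 :=
            mul_le_mul_of_nonneg_left h2 (Complex.abs.nonneg _)
        _ = Complex.abs (Q.eval u) := mul_one _
    have hφDR : φ (DR ζ) = (P.derivative.eval ζ * Q.eval ζ - P.eval ζ * Q.derivative.eval ζ)
        / (Q.eval ζ) ^ 2 := by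
      rw [hDRdef]
      simp only
      rw [map_add, map_smul, map_smul, smul_eq_mul, smul_eq_mul, hφPv, hφPvD]
      field_simp
      ring
    have hnorm : ‖DR ζ‖ = Complex.abs (φ (DR ζ)) := by
      rw [hφv]
      simp
    rw [hnorm, hφDR, map_div₀]
    have hsq : Complex.abs ((Q.eval ζ) ^ 2) = Complex.normSq (Q.eval ζ) := by
      rw [map_pow, Complex.sq_abs]
    rw [hsq]
    have hQpos : 0 < Complex.normSq (Q.eval ζ) := Complex.normSq_pos.mpr hQζ
    rw [div_le_iff₀ hQpos]
    have hcore := core (m := m) (n := n) (z := z) hz hPdeg (by rw [← hQdef]; exact hbd)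
      (ζ := ζ) hζabs
    rw [← hQdef] at hcore
    rw [hwdef]
    exact hcore
  -- continuity and integrability
  have hcontDQ : Continuous fun θ : ℝ => Complex.exp ((θ:ℝ) * Complex.I) :=
    Complex.continuous_exp.comp ((Complex.continuous_ofReal).mul continuous_const)
  have hcontDR : Continuous fun θ : ℝ => DR (Complex.exp ((θ:ℝ) * Complex.I)) := by
    rw [hDRdef]
    simp only
    have hcQ : Continuous fun θ : ℝ => Q.eval (Complex.exp ((θ:ℝ) * Complex.I)) :=
      Q.continuous.comp hcontDQ
    have hcQne : ∀ θ : ℝ, Q.eval (Complex.exp ((θ:ℝ) * Complex.I)) ≠ 0 :=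
      fun θ => hQne _ (hcirc_mem _ (Complex.abs_exp_ofReal_mul_I θ))
    have hcQ' : Continuous fun θ : ℝ => Q.derivative.eval (Complex.exp ((θ:ℝ) * Complex.I)) :=
      Q.derivative.continuous.comp hcontDQ
    have hcPv : Continuous fun θ : ℝ => Pv (Complex.exp ((θ:ℝ) * Complex.I)) := by
      rw [hPvdef]
      simp only
      apply continuous_finset_sum
      intro i _
      exact ((hcontDQ.pow i)).smul continuous_const
    have hcPvD : Continuous fun θ : ℝ => PvD (Complex.exp ((θ:ℝ) * Complex.I)) := by
      rw [hPvDdef]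
      simp only
      apply continuous_finset_sum
      intro i _
      exact ((continuous_const.mul (hcontDQ.pow (i-1)))).smul continuous_const
    apply Continuous.add
    · exact (hcQ.inv₀ hcQne).smul hcPvD
    · apply Continuous.smul ?_ hcPv
      apply Continuous.div (hcQ'.neg) (hcQ.pow 2)
      intro θ
      exact pow_ne_zero 2 (hcQne θ)
  have hcontA : Continuous fun θ : ℝ => ‖deriv A (Complex.exp ((θ:ℝ) * Complex.I))‖ := by
    have hfun : (fun θ : ℝ => ‖deriv A (Complex.exp ((θ:ℝ) * Complex.I))‖)
        = fun θ : ℝ => ‖DR (Complex.exp ((θ:ℝ) * Complex.I))‖ := by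
      funext θ
      rw [hderivA _ (hcirc_mem _ (Complex.abs_exp_ofReal_mul_I θ))]
    rw [hfun]
    exact hcontDR.norm
  have hcontw : Continuous w := by
    rw [hwdef]
    apply Continuous.add continuous_const
    apply continuous_finset_sum
    intro j _
    exact poisson_cont (z j) (hz j)
  -- integral comparison
  have hint1 : IntervalIntegrable (fun θ : ℝ => ‖deriv A (Complex.exp ((θ:ℝ) * Complex.I))‖)
      MeasureTheory.volume 0 (2*π) := hcontA.intervalIntegrable _ _
  have hint2 : IntervalIntegrable w MeasureTheory.volume 0 (2*π) :=
    hcontw.intervalIntegrable _ _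
  have hmono := intervalIntegral.integral_mono_on (by positivity : (0:ℝ) ≤ 2*π) hint1 hint2
    (fun θ _ => hpoint θ)
  have hwint : ∫ θ in (0:ℝ)..(2*π), w θ = 2 * π * ((n - m : ℕ) + m : ℕ) := by
    rw [hwdef]
    rw [intervalIntegral.integral_add (intervalIntegrable_const)
      (((continuous_finset_sum _ (fun j _ => poisson_cont (z j) (hz j)))).intervalIntegrable _ _)]
    rw [intervalIntegral.integral_const]
    rw [intervalIntegral.integral_finset_sum
      (fun j _ => (poisson_cont (z j) (hz j)).intervalIntegrable _ _)]
    have hpj : ∀ j : Fin m, (∫ θ in (0:ℝ)..(2*π),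
        |1 - Complex.normSq (z j)| / Complex.normSq (Complex.exp ((θ:ℝ) * Complex.I) - z j))
        = 2*π := fun j => poisson_int (hz j)
    rw [Finset.sum_congr rfl (fun j _ => hpj j)]
    simp only [Finset.sum_const, Finset.card_univ, Fintype.card_fin, smul_eq_mul, sub_zero]
    push_cast
    ring
  have hmax : ((n - m : ℕ) + m : ℕ) = max m n := by
    rw [Nat.sub_add_eq_max]
    exact max_comm n m
  calc ∫ θ in (0:ℝ)..(2*π), ‖deriv A (Complex.exp ((θ:ℝ) * Complex.I))‖
      ≤ ∫ θ in (0:ℝ)..(2*π), w θ := hmono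
    _ = 2 * π * ((n - m : ℕ) + m : ℕ) := hwint
    _ = 2 * π * (max m n : ℕ) := by rw [hmax]
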